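/- Work over F_2 with d odd, d ≥ 3. Let V be the quotient of the FI-module M(0) ⊕ M(d) by the sub-FI-module generated by (1, Σ_{f: [d]→[d] bijective} f) ∈ (M(0) ⊕ M(d))_d. Then for n ≥ d, dim_{F_2} V_n^{S_n} = 2 if and only if the binomial coefficient C(n−2, d−2) is even, and dim_{F_2} V_n^{S_n} = 1 otherwise. In particular dim V_n^{S_n} is eventually periodic in n with period a power of 2, and for d = 5 the smallest eventual period is 4. -/

import Mathlib

open Equiv

/-- Degree-`n` part of `M(0) ⊕ M(d)` over `F₂`: `F₂ × F₂[Inj(Fin d, Fin n)]`. -/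
abbrev MBig (d n : ℕ) := ZMod 2 × ((Fin d ↪ Fin n) →₀ ZMod 2)

/-- Degree-`n` part of the sub-FI-module of `M(0) ⊕ M(d)` generated by
`(1, ∑_{f : [d] → [d] bijective} f)`: spanned by the elements
`(1, ∑_{τ ∈ S_d} τ ∘ g)` for injections `g : Fin d ↪ Fin n`. -/
noncomputable def Ksub (d n : ℕ) : Submodule (ZMod 2) (MBig d n) :=
  Submodule.span (ZMod 2)
    {x | ∃ g : Fin d ↪ Fin n,
      x = (1, ∑ τ : Equiv.Perm (Fin d),
        Finsupp.single (τ.toEmbedding.trans g) (1 : ZMod 2))}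

/-- Degree-`n` part of the quotient FI-module `V = (M(0) ⊕ M(d)) / ⟨(1, ∑_f f)⟩`. -/
abbrev VQuot (d n : ℕ) := MBig d n ⧸ Ksub d n

open Finset

section Prelim
variable {M : Type*} [AddCommGroup M] [Module (ZMod 2) M]

lemma z2_add_self (x : M) : x + x = 0 := by
  have h : ((2 : ZMod 2)) • x = x + x := by rw [two_smul]
  rw [← h, show (2 : ZMod 2) = 0 by decide, zero_smul]

lemma z2_neg (x : M) : -x = x := by
  rw [neg_eq_iff_add_eq_zero, z2_add_self]

lemma z2_sub (x y : M) : x - y = x + y := by rw [sub_eq_add_neg, z2_neg]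

lemma z2_cases (v : ZMod 2) : v = 0 ∨ v = 1 := by revert v; decide

end Prelim

section Sgn
variable {α : Type*} [DecidableEq α] [Fintype α]

/-- Sign of a permutation, valued in `ZMod 2`. -/
noncomputable def sgn2 (τ : Perm α) : ZMod 2 := if Perm.sign τ = 1 then 0 else 1

lemma sgn2_one : sgn2 (1 : Perm α) = 0 := by simp [sgn2]

lemma sgn2_mul (σ τ : Perm α) : sgn2 (σ * τ) = sgn2 σ + sgn2 τ := by
  unfold sgn2
  rcases Int.units_eq_one_or (Perm.sign σ) with h1 | h1 <;>
    rcases Int.units_eq_one_or (Perm.sign τ) with h2 | h2 <;>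
    simp [Perm.sign_mul, h1, h2] <;> decide

lemma sgn2_swap {x y : α} (h : x ≠ y) : sgn2 (swap x y) = 1 := by
  simp [sgn2, Perm.sign_swap h]

/-- Any homomorphism `Perm α → ZMod 2` is a multiple of the sign. -/
lemma hom_eq_sgn2 {x0 y0 : α} (h0 : x0 ≠ y0) (χ : Perm α → ZMod 2)
    (hχ : ∀ σ τ, χ (σ * τ) = χ σ + χ τ) :
    ∀ τ, χ τ = χ (swap x0 y0) * sgn2 τ := by
  have hone : χ 1 = 0 := by
    have h := hχ 1 1; rw [one_mul] at h
    exact h.trans (z2_add_self _)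
  have hswap : ∀ (x y : α), x ≠ y → χ (swap x y) = χ (swap x0 y0) := by
    intro x y hxy
    obtain ⟨c, hc⟩ := isConj_iff.mp (Perm.isConj_swap h0 hxy)
    have hinv : χ c + χ c⁻¹ = 0 := by
      rw [← hχ, mul_inv_cancel, hone]
    calc χ (swap x y) = χ (c * swap x0 y0 * c⁻¹) := by rw [hc]
      _ = χ c + χ (swap x0 y0) + χ c⁻¹ := by rw [hχ, hχ]
      _ = χ (swap x0 y0) + (χ c + χ c⁻¹) := by ring
      _ = χ (swap x0 y0) := by rw [hinv, add_zero]
  intro τ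
  refine Perm.swap_induction_on τ ?_ fun f x y hxy ih => ?_
  · rw [hone, sgn2_one, mul_zero]
  · rw [hχ, sgn2_mul, hswap _ _ hxy, ih, sgn2_swap hxy, mul_add, mul_one]

end Sgn

section Mrep
variable {d n : ℕ}

/-- The range of an embedding, as a finset. -/
def rng (g : Fin d ↪ Fin n) : Finset (Fin n) := Finset.univ.map g

lemma card_rng (g : Fin d ↪ Fin n) : (rng g).card = d := by simp [rng]

lemma mem_rng {g : Fin d ↪ Fin n} {x : Fin n} : x ∈ rng g ↔ ∃ i, g i = x := by simp [rng]

lemma rng_trans (g : Fin d ↪ Fin n) (f : Fin n ↪ Fin n) :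
    rng (g.trans f) = (rng g).map f := by
  rw [rng, rng, Finset.map_map]

lemma rng_perm_trans (τ : Perm (Fin d)) (g : Fin d ↪ Fin n) :
    rng (τ.toEmbedding.trans g) = rng g := by
  rw [rng, ← Finset.map_map, Finset.map_univ_equiv, rng]

/-- Monotone representative of the "same range" class of `g`. -/
noncomputable def mrep (g : Fin d ↪ Fin n) : Fin d ↪ Fin n :=
  ((rng g).orderEmbOfFin (card_rng g)).toEmbedding

lemma strictMono_mrep (g : Fin d ↪ Fin n) : StrictMono (mrep g) :=
  ((rng g).orderEmbOfFin (card_rng g)).strictMono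

lemma rng_mrep (g : Fin d ↪ Fin n) : rng (mrep g) = rng g := by
  refine Finset.eq_of_subset_of_card_le (fun x hx => ?_) (by rw [card_rng, card_rng])
  obtain ⟨i, rfl⟩ := mem_rng.mp hx
  exact Finset.orderEmbOfFin_mem _ _ _

lemma mono_eq_of_rng_eq {g g' : Fin d ↪ Fin n} (hg : StrictMono g) (hg' : StrictMono g')
    (h : rng g = rng g') : g = g' := by
  have h1 : ⇑g = (rng g').orderEmbOfFin (card_rng g') :=
    Finset.orderEmbOfFin_unique _ (fun x => h ▸ mem_rng.mpr ⟨x, rfl⟩) hg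
  have h2 : ⇑g' = (rng g').orderEmbOfFin (card_rng g') :=
    Finset.orderEmbOfFin_unique _ (fun x => mem_rng.mpr ⟨x, rfl⟩) hg'
  exact Function.Embedding.ext fun i => by rw [show g i = _ from congrFun h1 i,
    show g' i = _ from congrFun h2 i]

/-- The permutation comparing `g` with its monotone representative. -/
noncomputable def mperm (g : Fin d ↪ Fin n) : Perm (Fin d) :=
  Equiv.ofBijective (fun i => ((rng g).orderIsoOfFin (card_rng g)).symm ⟨g i, mem_rng.mpr ⟨i, rfl⟩⟩)
    (Finite.injective_iff_bijective.mp (fun i j h => g.injective (by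
      have := ((rng g).orderIsoOfFin (card_rng g)).symm.injective h
      exact congrArg Subtype.val this)))

lemma mrep_mperm_apply (g : Fin d ↪ Fin n) (i : Fin d) : mrep g (mperm g i) = g i := by
  show ((rng g).orderEmbOfFin (card_rng g))
      (((rng g).orderIsoOfFin (card_rng g)).symm ⟨g i, mem_rng.mpr ⟨i, rfl⟩⟩) = g i
  rw [← Finset.coe_orderIsoOfFin_apply, OrderIso.apply_symm_apply]

lemma mperm_factor (g : Fin d ↪ Fin n) : (mperm g).toEmbedding.trans (mrep g) = g :=
  Function.Embedding.ext fun i => mrep_mperm_apply g i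

lemma unique_factor {g h : Fin d ↪ Fin n} {τ : Perm (Fin d)} (hmono : StrictMono h)
    (hfac : τ.toEmbedding.trans h = g) : h = mrep g ∧ τ = mperm g := by
  have hrng : rng h = rng g := by rw [← hfac, rng_perm_trans]
  have h1 : h = mrep g :=
    mono_eq_of_rng_eq hmono (strictMono_mrep g) (by rw [hrng, rng_mrep])
  refine ⟨h1, Equiv.ext fun i => h.injective ?_⟩
  show h (τ i) = h (mperm g i)
  calc h (τ i) = g i := congrFun (congrArg (fun (e : Fin d ↪ Fin n) => ⇑e) hfac) i
    _ = mrep g (mperm g i) := (mrep_mperm_apply g i).symm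
    _ = h (mperm g i) := by rw [← h1]

lemma factor_factor (τ : Perm (Fin d)) (g : Fin d ↪ Fin n) :
    (mperm g * τ).toEmbedding.trans (mrep g) = τ.toEmbedding.trans g :=
  Function.Embedding.ext fun i => mrep_mperm_apply g (τ i)

lemma mperm_trans (τ : Perm (Fin d)) (g : Fin d ↪ Fin n) :
    mperm (τ.toEmbedding.trans g) = mperm g * τ :=
  ((unique_factor (strictMono_mrep g) (factor_factor τ g)).2).symm

lemma mrep_perm_trans (τ : Perm (Fin d)) (g : Fin d ↪ Fin n) :
    mrep (τ.toEmbedding.trans g) = mrep g :=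
  ((unique_factor (strictMono_mrep g) (factor_factor τ g)).1).symm

/-- Sign of `g` relative to its monotone representative. -/
noncomputable def eps (g : Fin d ↪ Fin n) : ZMod 2 := sgn2 (mperm g)

lemma one_trans (g : Fin d ↪ Fin n) : (1 : Perm (Fin d)).toEmbedding.trans g = g :=
  Function.Embedding.ext fun i => rfl

lemma mperm_mono {g : Fin d ↪ Fin n} (hg : StrictMono g) : mperm g = 1 :=
  ((unique_factor hg (one_trans g)).2).symm

lemma eps_mono {g : Fin d ↪ Fin n} (hg : StrictMono g) : eps g = 0 := by
  rw [eps, mperm_mono hg]; simp [sgn2]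

lemma eps_perm_trans (τ : Perm (Fin d)) (g : Fin d ↪ Fin n) :
    eps (τ.toEmbedding.trans g) = eps g + sgn2 τ := by
  rw [eps, mperm_trans]
  exact sgn2_mul _ _


lemma trans_assoc' (τ : Perm (Fin d)) (g : Fin d ↪ Fin n) (σ : Perm (Fin n)) :
    (τ.toEmbedding.trans g).trans σ.toEmbedding
      = τ.toEmbedding.trans (g.trans σ.toEmbedding) := rfl

lemma eps_post (g : Fin d ↪ Fin n) (σ : Perm (Fin n)) :
    eps (g.trans σ.toEmbedding) = eps g + eps ((mrep g).trans σ.toEmbedding) := by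
  conv_lhs => rw [← mperm_factor g, trans_assoc']
  rw [eps_perm_trans, add_comm]
  rfl

end Mrep

lemma exists_perm_trans {d n : ℕ} (g g' : Fin d ↪ Fin n) :
    ∃ σ : Perm (Fin n), g.trans σ.toEmbedding = g' := by
  classical
  have hcard : Fintype.card (↥(Set.range ⇑g)ᶜ) = Fintype.card (↥(Set.range ⇑g')ᶜ) := by
    rw [Fintype.card_compl_set, Fintype.card_compl_set,
      Set.card_range_of_injective g.injective, Set.card_range_of_injective g'.injective]
  refine ⟨(Equiv.Set.sumCompl (Set.range ⇑g)).symm.trans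
      ((Equiv.sumCongr (g.toEquivRange.symm.trans g'.toEquivRange)
        (Fintype.equivOfCardEq hcard)).trans (Equiv.Set.sumCompl (Set.range ⇑g'))),
    Function.Embedding.ext fun i => ?_⟩
  show (Equiv.Set.sumCompl (Set.range ⇑g'))
      ((Equiv.sumCongr (g.toEquivRange.symm.trans g'.toEquivRange) (Fintype.equivOfCardEq hcard))
        ((Equiv.Set.sumCompl (Set.range ⇑g)).symm (g i))) = g' i
  rw [Set.sumCompl_symm_apply_of_mem (Set.mem_range_self i)]
  simp [Function.Embedding.toEquivRange_symm_apply_self, Function.Embedding.toEquivRange_apply]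

section KChar
variable {d n : ℕ}

/-- `ψ` is constant on "same range" classes. -/
def clsP (ψ : (Fin d ↪ Fin n) →₀ ZMod 2) : Prop :=
  ∀ (g : Fin d ↪ Fin n) (τ : Perm (Fin d)), ψ (τ.toEmbedding.trans g) = ψ g

/-- Sum of the values of `ψ` over monotone representatives. -/
noncomputable def tot (ψ : (Fin d ↪ Fin n) →₀ ZMod 2) : ZMod 2 :=
  ∑ g : Fin d ↪ Fin n, if StrictMono ⇑g then ψ g else 0

/-- The generator of `Ksub` associated to `g` (second component). -/
noncomputable def gen (g : Fin d ↪ Fin n) : (Fin d ↪ Fin n) →₀ ZMod 2 :=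
  ∑ τ : Equiv.Perm (Fin d), Finsupp.single (τ.toEmbedding.trans g) (1 : ZMod 2)

lemma perm_trans_injective (g : Fin d ↪ Fin n) {τ τ' : Perm (Fin d)}
    (h : τ.toEmbedding.trans g = τ'.toEmbedding.trans g) : τ = τ' :=
  Equiv.ext fun i => g.injective (congrFun (congrArg (fun (e : Fin d ↪ Fin n) => ⇑e) h) i)

lemma gen_apply (g g' : Fin d ↪ Fin n) :
    gen g g' = if ∃ τ : Perm (Fin d), τ.toEmbedding.trans g = g' then 1 else 0 := by
  classical
  rw [gen, Finsupp.finset_sum_apply]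
  by_cases h : ∃ τ : Perm (Fin d), τ.toEmbedding.trans g = g'
  · obtain ⟨τ0, h0⟩ := h
    rw [if_pos ⟨τ0, h0⟩, Finset.sum_eq_single τ0]
    · rw [h0, Finsupp.single_eq_same]
    · intro τ _ hτ
      rw [Finsupp.single_apply, if_neg]
      intro he; exact hτ (perm_trans_injective g (he.trans h0.symm))
    · simp
  · rw [if_neg h, Finset.sum_eq_zero]
    intro τ _
    rw [Finsupp.single_apply, if_neg (fun he => h ⟨τ, he⟩)]

lemma cls_gen (g : Fin d ↪ Fin n) : clsP (gen g) := by
  intro g' ρ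
  rw [gen_apply, gen_apply]
  congr 1
  apply propext
  constructor
  · rintro ⟨τ, hτ⟩
    refine ⟨τ * ρ⁻¹, Function.Embedding.ext fun i => ?_⟩
    have := congrFun (congrArg (fun (e : Fin d ↪ Fin n) => ⇑e) hτ) (ρ⁻¹ i)
    simpa using this
  · rintro ⟨τ, hτ⟩
    refine ⟨τ * ρ, Function.Embedding.ext fun i => ?_⟩
    exact congrFun (congrArg (fun (e : Fin d ↪ Fin n) => ⇑e) hτ) (ρ i)

lemma mrep_of_mono {g : Fin d ↪ Fin n} (hg : StrictMono ⇑g) : mrep g = g :=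
  ((unique_factor hg (one_trans g)).1).symm

lemma inv_mperm_trans (g : Fin d ↪ Fin n) :
    ((mperm g)⁻¹).toEmbedding.trans g = mrep g := by
  refine Function.Embedding.ext fun i => ?_
  show g ((mperm g)⁻¹ i) = mrep g i
  rw [← mrep_mperm_apply g ((mperm g)⁻¹ i), ← Equiv.Perm.mul_apply, mul_inv_cancel, Equiv.Perm.one_apply]

lemma cls_eval {ψ : (Fin d ↪ Fin n) →₀ ZMod 2} (hψ : clsP ψ) (g : Fin d ↪ Fin n) :
    ψ g = ψ (mrep g) := by
  conv_lhs => rw [← mperm_factor g]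
  exact hψ _ _

lemma tot_gen (g : Fin d ↪ Fin n) : tot (gen g) = 1 := by
  rw [tot, Finset.sum_eq_single (mrep g)]
  · rw [if_pos (strictMono_mrep g), gen_apply, if_pos ⟨(mperm g)⁻¹, inv_mperm_trans g⟩]
  · intro h _ hne
    by_cases hm : StrictMono ⇑h
    · rw [if_pos hm, gen_apply, if_neg]
      rintro ⟨τ, rfl⟩
      exact hne ((mrep_of_mono hm).symm.trans (mrep_perm_trans τ g))
    · rw [if_neg hm]
  · intro hmem; exact absurd (Finset.mem_univ _) hmem

lemma tot_add (ψ φ : (Fin d ↪ Fin n) →₀ ZMod 2) : tot (ψ + φ) = tot ψ + tot φ := by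
  rw [tot, tot, tot, ← Finset.sum_add_distrib]
  refine Finset.sum_congr rfl fun g _ => ?_
  by_cases hm : StrictMono ⇑g <;> simp [hm]

lemma tot_zero' : tot (0 : (Fin d ↪ Fin n) →₀ ZMod 2) = 0 := by
  rw [tot]; refine Finset.sum_eq_zero fun g _ => ?_
  by_cases hm : StrictMono ⇑g <;> simp [hm]

/-- The explicit description of `Ksub` as a submodule. -/
noncomputable def KP (d n : ℕ) : Submodule (ZMod 2) (MBig d n) where
  carrier := {p | clsP p.2 ∧ tot p.2 = p.1}
  add_mem' := by
    rintro a b ⟨ha1, ha2⟩ ⟨hb1, hb2⟩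
    refine ⟨fun g τ => ?_, ?_⟩
    · show (a.2 + b.2) _ = (a.2 + b.2) _
      rw [Finsupp.add_apply, Finsupp.add_apply, ha1 g τ, hb1 g τ]
    · show tot (a.2 + b.2) = a.1 + b.1
      rw [tot_add, ha2, hb2]
  zero_mem' := by
    refine ⟨fun g τ => rfl, tot_zero'⟩
  smul_mem' := by
    intro c x hx
    rcases z2_cases c with rfl | rfl
    · rw [zero_smul]; exact ⟨fun g τ => rfl, tot_zero'⟩
    · rw [one_smul]; exact hx

lemma mem_KP_iff {c : ZMod 2} {ψ : (Fin d ↪ Fin n) →₀ ZMod 2} :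
    (c, ψ) ∈ KP d n ↔ clsP ψ ∧ tot ψ = c := Iff.rfl

lemma mem_Ksub_iff {c : ZMod 2} {ψ : (Fin d ↪ Fin n) →₀ ZMod 2} :
    (c, ψ) ∈ Ksub d n ↔ clsP ψ ∧ tot ψ = c := by
  constructor
  · intro h
    have hle : Ksub d n ≤ KP d n := by
      rw [Ksub]
      refine Submodule.span_le.mpr ?_
      rintro x ⟨g, rfl⟩
      exact ⟨cls_gen g, tot_gen g⟩
    exact hle h
  · rintro ⟨h1, h2⟩
    have key : ((c, ψ) : MBig d n) =
        ∑ g : Fin d ↪ Fin n, if StrictMono ⇑g then ψ g • ((1 : ZMod 2), gen g) else 0 := by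
      refine Prod.ext ?_ ?_
      · rw [Prod.fst_sum, ← h2, tot]
        refine Finset.sum_congr rfl fun g _ => ?_
        by_cases hm : StrictMono ⇑g <;> simp [hm, smul_eq_mul]
      · show ψ = _
        rw [Prod.snd_sum]
        refine Finsupp.ext fun g' => ?_
        rw [Finsupp.finset_sum_apply, Finset.sum_eq_single (mrep g')]
        · rw [if_pos (strictMono_mrep g')]
          show ψ g' = (ψ (mrep g') • gen (mrep g')) g'
          rw [Finsupp.smul_apply, gen_apply, if_pos ⟨mperm g', mperm_factor g'⟩,
            smul_eq_mul, mul_one, cls_eval h1]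
        · intro h _ hne
          by_cases hm : StrictMono ⇑h
          · rw [if_pos hm]
            show (ψ h • gen h) g' = 0
            rw [Finsupp.smul_apply, gen_apply, if_neg, smul_zero]
            rintro ⟨τ, rfl⟩
            exact hne ((mrep_of_mono hm).symm.trans (mrep_perm_trans τ h).symm)
          · rw [if_neg hm]; rfl
        · intro hmem; exact absurd (Finset.mem_univ _) hmem
    rw [key]
    refine Submodule.sum_mem _ fun g _ => ?_
    by_cases hm : StrictMono ⇑g
    · rw [if_pos hm]
      exact Submodule.smul_mem _ _ (Submodule.subset_span ⟨g, rfl⟩)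
    · rw [if_neg hm]; exact Submodule.zero_mem _

lemma cancel_trans (g : Fin d ↪ Fin n) (σ : Perm (Fin n)) :
    (g.trans σ.toEmbedding).trans σ⁻¹.toEmbedding = g :=
  Function.Embedding.ext fun i => σ.symm_apply_apply (g i)

lemma cancel_trans' (g : Fin d ↪ Fin n) (σ : Perm (Fin n)) :
    (g.trans σ⁻¹.toEmbedding).trans σ.toEmbedding = g :=
  Function.Embedding.ext fun i => σ.apply_symm_apply (g i)

/-- The sum of `eps (g ∘ σ)` over monotone `g`; a homomorphism in `σ`. -/
noncomputable def Tfun (d n : ℕ) (σ : Perm (Fin n)) : ZMod 2 :=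
  ∑ g : Fin d ↪ Fin n, if StrictMono ⇑g then eps (g.trans σ.toEmbedding) else 0

lemma Tfun_eq_filter (σ : Perm (Fin n)) :
    Tfun d n σ = ∑ g ∈ Finset.univ.filter (fun g : Fin d ↪ Fin n => StrictMono ⇑g),
      eps (g.trans σ.toEmbedding) :=
  (Finset.sum_filter _ _).symm

lemma sum_mrep_reindex (σ' : Perm (Fin n)) (Φ : (Fin d ↪ Fin n) → ZMod 2) :
    ∑ g ∈ Finset.univ.filter (fun g : Fin d ↪ Fin n => StrictMono ⇑g),
        Φ (mrep (g.trans σ'.toEmbedding))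
      = ∑ g ∈ Finset.univ.filter (fun g : Fin d ↪ Fin n => StrictMono ⇑g), Φ g := by
  refine Finset.sum_nbij' (fun g => mrep (g.trans σ'.toEmbedding))
    (fun k => mrep (k.trans σ'⁻¹.toEmbedding)) ?_ ?_ ?_ ?_ ?_
  · intro g _; exact Finset.mem_filter.mpr ⟨Finset.mem_univ _, strictMono_mrep _⟩
  · intro k _; exact Finset.mem_filter.mpr ⟨Finset.mem_univ _, strictMono_mrep _⟩
  · intro g hg
    refine mono_eq_of_rng_eq (strictMono_mrep _) ((Finset.mem_filter.mp hg).2) ?_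
    rw [rng_mrep, rng_trans, rng_mrep, ← rng_trans, cancel_trans]
  · intro k hk
    refine mono_eq_of_rng_eq (strictMono_mrep _) ((Finset.mem_filter.mp hk).2) ?_
    rw [rng_mrep, rng_trans, rng_mrep, ← rng_trans, cancel_trans']
  · intro g _; rfl

lemma trans_mul (g : Fin d ↪ Fin n) (σ σ' : Perm (Fin n)) :
    g.trans (σ * σ').toEmbedding = (g.trans σ'.toEmbedding).trans σ.toEmbedding := rfl

lemma Tfun_hom (σ σ' : Perm (Fin n)) : Tfun d n (σ * σ') = Tfun d n σ + Tfun d n σ' := by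
  rw [Tfun_eq_filter, Tfun_eq_filter, Tfun_eq_filter]
  calc ∑ g ∈ Finset.univ.filter (fun g : Fin d ↪ Fin n => StrictMono ⇑g),
        eps (g.trans (σ * σ').toEmbedding)
      = ∑ g ∈ Finset.univ.filter (fun g : Fin d ↪ Fin n => StrictMono ⇑g),
        (eps (g.trans σ'.toEmbedding) + eps ((mrep (g.trans σ'.toEmbedding)).trans σ.toEmbedding)) := by
        refine Finset.sum_congr rfl fun g _ => ?_
        rw [trans_mul, eps_post]
    _ = (∑ g ∈ Finset.univ.filter (fun g : Fin d ↪ Fin n => StrictMono ⇑g),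
          eps (g.trans σ'.toEmbedding))
        + ∑ g ∈ Finset.univ.filter (fun g : Fin d ↪ Fin n => StrictMono ⇑g),
          eps ((mrep (g.trans σ'.toEmbedding)).trans σ.toEmbedding) := Finset.sum_add_distrib
    _ = _ := by
        rw [sum_mrep_reindex σ' (fun k => eps (k.trans σ.toEmbedding)), add_comm]

lemma vne {m : ℕ} {x y : Fin m} (h : x ≠ y) : (x : ℕ) ≠ (y : ℕ) := fun hc => h (Fin.ext hc)

lemma eps_swap_adj {a b : Fin n} (hab : (a : ℕ) + 1 = (b : ℕ)) {h : Fin d ↪ Fin n}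
    (hm : StrictMono ⇑h) :
    eps (h.trans (Equiv.swap a b).toEmbedding) = if a ∈ rng h ∧ b ∈ rng h then 1 else 0 := by
  have hne : a ≠ b := fun he => by rw [he] at hab; omega
  by_cases hcase : a ∈ rng h ∧ b ∈ rng h
  · rw [if_pos hcase]
    obtain ⟨i, hi⟩ := mem_rng.mp hcase.1
    obtain ⟨j, hj⟩ := mem_rng.mp hcase.2
    have hij : i ≠ j := fun he => hne (by rw [← hi, ← hj, he])
    have heq : h.trans (Equiv.swap a b).toEmbedding = (Equiv.swap i j).toEmbedding.trans h := by
      refine Function.Embedding.ext fun k => ?_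
      simp only [Function.Embedding.trans_apply, Equiv.coe_toEmbedding]
      rcases eq_or_ne k i with rfl | hki
      · rw [hi, Equiv.swap_apply_left, Equiv.swap_apply_left, hj]
      rcases eq_or_ne k j with rfl | hkj
      · rw [hj, Equiv.swap_apply_right, Equiv.swap_apply_right, hi]
      · rw [Equiv.swap_apply_of_ne_of_ne hki hkj, Equiv.swap_apply_of_ne_of_ne
          (fun hc => hki (h.injective (hc.trans hi.symm)))
          (fun hc => hkj (h.injective (hc.trans hj.symm)))]
    rw [heq, eps_perm_trans, eps_mono hm, zero_add, sgn2_swap hij]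
  · rw [if_neg hcase]
    by_cases ha : a ∈ rng h
    · -- a in range, b not
      have hb : b ∉ rng h := fun hb => hcase ⟨ha, hb⟩
      obtain ⟨i, hi⟩ := mem_rng.mp ha
      refine eps_mono ?_
      intro k l hkl
      show (Equiv.swap a b) (h k) < (Equiv.swap a b) (h l)
      have hvl := hm hkl
      rcases eq_or_ne k i with rfl | hki
      · have hlj : l ≠ k := (ne_of_gt hkl)
        have h1 : h l ≠ a := fun hc => hlj (h.injective (hc.trans hi.symm))
        have h2 : h l ≠ b := fun hc => hb (mem_rng.mpr ⟨l, hc⟩)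
        rw [hi, Equiv.swap_apply_left, Equiv.swap_apply_of_ne_of_ne h1 h2]
        have := vne h1; have := vne h2
        rw [Fin.lt_def] at hvl ⊢
        rw [hi] at hvl
        omega
      rcases eq_or_ne l i with rfl | hli
      · have h1 : h k ≠ a := fun hc => hki (h.injective (hc.trans hi.symm))
        have h2 : h k ≠ b := fun hc => hb (mem_rng.mpr ⟨k, hc⟩)
        rw [hi, Equiv.swap_apply_left, Equiv.swap_apply_of_ne_of_ne h1 h2]
        rw [Fin.lt_def] at hvl ⊢
        rw [hi] at hvl
        omega
      · have h1 : h k ≠ a := fun hc => hki (h.injective (hc.trans hi.symm))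
        have h2 : h k ≠ b := fun hc => hb (mem_rng.mpr ⟨k, hc⟩)
        have h3 : h l ≠ a := fun hc => hli (h.injective (hc.trans hi.symm))
        have h4 : h l ≠ b := fun hc => hb (mem_rng.mpr ⟨l, hc⟩)
        rw [Equiv.swap_apply_of_ne_of_ne h1 h2, Equiv.swap_apply_of_ne_of_ne h3 h4]
        exact hvl
    · by_cases hbm : b ∈ rng h
      · -- b in range, a not
        obtain ⟨j, hj⟩ := mem_rng.mp hbm
        refine eps_mono ?_
        intro k l hkl
        show (Equiv.swap a b) (h k) < (Equiv.swap a b) (h l)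
        have hvl := hm hkl
        rcases eq_or_ne k j with rfl | hkj
        · have h1 : h l ≠ b := fun hc => (ne_of_gt hkl) (h.injective (hc.trans hj.symm))
          have h2 : h l ≠ a := fun hc => ha (mem_rng.mpr ⟨l, hc⟩)
          rw [hj, Equiv.swap_apply_right, Equiv.swap_apply_of_ne_of_ne h2 h1]
          have := vne h1; have := vne h2
          rw [Fin.lt_def] at hvl ⊢
          rw [hj] at hvl
          omega
        rcases eq_or_ne l j with rfl | hlj
        · have h1 : h k ≠ b := fun hc => hkj (h.injective (hc.trans hj.symm))
          have h2 : h k ≠ a := fun hc => ha (mem_rng.mpr ⟨k, hc⟩)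
          rw [hj, Equiv.swap_apply_right, Equiv.swap_apply_of_ne_of_ne h2 h1]
          have := vne h1; have := vne h2
          rw [Fin.lt_def] at hvl ⊢
          rw [hj] at hvl
          omega
        · have h1 : h k ≠ b := fun hc => hkj (h.injective (hc.trans hj.symm))
          have h2 : h k ≠ a := fun hc => ha (mem_rng.mpr ⟨k, hc⟩)
          have h3 : h l ≠ b := fun hc => hlj (h.injective (hc.trans hj.symm))
          have h4 : h l ≠ a := fun hc => ha (mem_rng.mpr ⟨l, hc⟩)
          rw [Equiv.swap_apply_of_ne_of_ne h2 h1, Equiv.swap_apply_of_ne_of_ne h4 h3]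
          exact hvl
      · -- neither
        have heq : h.trans (Equiv.swap a b).toEmbedding = h := by
          refine Function.Embedding.ext fun k => ?_
          show (Equiv.swap a b) (h k) = h k
          exact Equiv.swap_apply_of_ne_of_ne (fun hc => ha (mem_rng.mpr ⟨k, hc⟩))
            (fun hc => hbm (mem_rng.mpr ⟨k, hc⟩))
        rw [heq, eps_mono hm]

lemma rng_orderEmb (T : Finset (Fin n)) (hT : T.card = d) :
    rng (T.orderEmbOfFin hT).toEmbedding = T := by
  refine Finset.eq_of_subset_of_card_le (fun x hx => ?_) (by rw [card_rng, hT])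
  obtain ⟨i, rfl⟩ := mem_rng.mp hx
  exact Finset.orderEmbOfFin_mem _ _ _

lemma count_both (hd2 : 2 ≤ d) {a b : Fin n} (hab : a ≠ b) :
    (Finset.univ.filter
      (fun g : Fin d ↪ Fin n => StrictMono ⇑g ∧ a ∈ rng g ∧ b ∈ rng g)).card
      = Nat.choose (n - 2) (d - 2) := by
  classical
  have hcard2 : ((Finset.univ.erase a).erase b).card = n - 2 := by
    rw [Finset.card_erase_of_mem (Finset.mem_erase.mpr ⟨hab.symm, Finset.mem_univ b⟩),
      Finset.card_erase_of_mem (Finset.mem_univ a), Finset.card_univ, Fintype.card_fin]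
    omega
  have key : (Finset.univ.filter
      (fun g : Fin d ↪ Fin n => StrictMono ⇑g ∧ a ∈ rng g ∧ b ∈ rng g)).card
      = (Finset.powersetCard (d - 2) ((Finset.univ.erase a).erase b)).card := by
    refine Finset.card_bij' (fun g _ => ((rng g).erase a).erase b)
      (fun S hS => ((insert a (insert b S)).orderEmbOfFin ?_).toEmbedding) ?_ ?_ ?_ ?_
    · -- card of insert a (insert b S) = d
      obtain ⟨hsub, hcard⟩ := Finset.mem_powersetCard.mp hS
      have hbS : b ∉ S := fun hc => (Finset.mem_erase.mp (hsub hc)).1 rfl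
      have haS : a ∉ insert b S := by
        intro hc
        rcases Finset.mem_insert.mp hc with rfl | hc'
        · exact hab rfl
        · exact (Finset.mem_erase.mp (Finset.mem_erase.mp (hsub hc')).2).1 rfl
      rw [Finset.card_insert_of_notMem haS, Finset.card_insert_of_notMem hbS, hcard]
      omega
    · -- i maps into target
      intro g hg
      obtain ⟨-, hmono, hag, hbg⟩ :
          g ∈ Finset.univ ∧ StrictMono ⇑g ∧ a ∈ rng g ∧ b ∈ rng g := by
        have := Finset.mem_filter.mp hg; exact ⟨this.1, this.2.1, this.2.2.1, this.2.2.2⟩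
      refine Finset.mem_powersetCard.mpr ⟨?_, ?_⟩
      · exact Finset.erase_subset_erase _ (Finset.erase_subset_erase _ (Finset.subset_univ _))
      · rw [Finset.card_erase_of_mem (Finset.mem_erase.mpr ⟨fun hc => hab hc.symm, hbg⟩),
          Finset.card_erase_of_mem hag, card_rng]
        omega
    · -- j maps into source
      intro S hS
      refine Finset.mem_filter.mpr ⟨Finset.mem_univ _, (Finset.orderEmbOfFin _ _).strictMono,
        ?_, ?_⟩
      · rw [rng_orderEmb]
        exact Finset.mem_insert_self a _
      · rw [rng_orderEmb]
        exact Finset.mem_insert_of_mem (Finset.mem_insert_self b _)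
    · -- left inverse
      intro g hg
      obtain ⟨-, hmono, hag, hbg⟩ :
          g ∈ Finset.univ ∧ StrictMono ⇑g ∧ a ∈ rng g ∧ b ∈ rng g := by
        have := Finset.mem_filter.mp hg; exact ⟨this.1, this.2.1, this.2.2.1, this.2.2.2⟩
      have hset : insert a (insert b (((rng g).erase a).erase b)) = rng g := by
        rw [Finset.insert_erase (Finset.mem_erase.mpr ⟨fun hc => hab hc.symm, hbg⟩),
          Finset.insert_erase hag]
      refine mono_eq_of_rng_eq ((Finset.orderEmbOfFin _ _).strictMono) hmono ?_
      rw [rng_orderEmb, hset]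
    · -- right inverse
      intro S hS
      obtain ⟨hsub, hcard⟩ := Finset.mem_powersetCard.mp hS
      have hbS : b ∉ S := fun hc => (Finset.mem_erase.mp (hsub hc)).1 rfl
      have haS : a ∉ insert b S := by
        intro hc
        rcases Finset.mem_insert.mp hc with rfl | hc'
        · exact hab rfl
        · exact (Finset.mem_erase.mp (Finset.mem_erase.mp (hsub hc')).2).1 rfl
      simp only [rng_orderEmb]
      rw [Finset.erase_insert haS, Finset.erase_insert hbS]
  rw [key, Finset.card_powersetCard, hcard2]

lemma Tfun_swap (hd2 : 2 ≤ d) {a b : Fin n} (hab : (a : ℕ) + 1 = (b : ℕ)) :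
    Tfun d n (Equiv.swap a b) = (Nat.choose (n - 2) (d - 2) : ZMod 2) := by
  classical
  have hne : a ≠ b := fun he => by rw [he] at hab; omega
  rw [Tfun]
  calc (∑ g : Fin d ↪ Fin n, if StrictMono ⇑g then eps (g.trans (Equiv.swap a b).toEmbedding)
        else 0)
      = ∑ g : Fin d ↪ Fin n,
          if StrictMono ⇑g ∧ a ∈ rng g ∧ b ∈ rng g then 1 else 0 := by
        refine Finset.sum_congr rfl fun g _ => ?_
        by_cases hm : StrictMono ⇑g
        · rw [if_pos hm, eps_swap_adj hab hm]
          by_cases hmem : a ∈ rng g ∧ b ∈ rng g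
          · rw [if_pos hmem, if_pos ⟨hm, hmem⟩]
          · rw [if_neg hmem, if_neg (fun hc => hmem ⟨hc.2.1, hc.2.2⟩)]
        · rw [if_neg hm, if_neg (fun hc => hm hc.1)]
    _ = (Nat.choose (n - 2) (d - 2) : ZMod 2) := by
        rw [Finset.sum_boole, count_both hd2 hne]

/-- The sign-twisted vector `∑_g ε(g)·g`. -/
noncomputable def phichi (d n : ℕ) : (Fin d ↪ Fin n) →₀ ZMod 2 :=
  ∑ g : Fin d ↪ Fin n, Finsupp.single g (eps g)

lemma phichi_apply (g : Fin d ↪ Fin n) : phichi d n g = eps g := by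
  rw [phichi, Finsupp.finset_sum_apply, Finset.sum_eq_single g]
  · exact Finsupp.single_eq_same
  · intro h _ hne; exact Finsupp.single_eq_of_ne' hne
  · intro hg; exact absurd (Finset.mem_univ _) hg

/-- Post-composition with a permutation, as an equivalence of embeddings. -/
def postEquiv (d : ℕ) {n : ℕ} (σ : Perm (Fin n)) : (Fin d ↪ Fin n) ≃ (Fin d ↪ Fin n) where
  toFun g := g.trans σ.toEmbedding
  invFun g := g.trans σ⁻¹.toEmbedding
  left_inv g := cancel_trans g σ
  right_inv g := cancel_trans' g σ

lemma mapDomain_post_apply (σ : Perm (Fin n)) (φ : (Fin d ↪ Fin n) →₀ ZMod 2)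
    (g : Fin d ↪ Fin n) :
    Finsupp.mapDomain (fun g : Fin d ↪ Fin n => g.trans σ.toEmbedding) φ g
      = φ (g.trans σ⁻¹.toEmbedding) := by
  have he : (fun g : Fin d ↪ Fin n => g.trans σ.toEmbedding) = ⇑(postEquiv d σ) := rfl
  rw [he, Finsupp.mapDomain_equiv_apply]
  rfl

lemma phichi_diff_cls (σ : Perm (Fin n)) :
    clsP (Finsupp.mapDomain (fun g : Fin d ↪ Fin n => g.trans σ.toEmbedding) (phichi d n)
      + phichi d n) := by
  intro g τ
  rw [Finsupp.add_apply, Finsupp.add_apply, mapDomain_post_apply, mapDomain_post_apply,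
    phichi_apply, phichi_apply, phichi_apply, phichi_apply, trans_assoc',
    eps_perm_trans, eps_perm_trans]
  ring_nf
  rw [show (2 : ZMod 2) = 0 by decide, mul_zero, add_zero]

lemma phichi_diff_tot (σ : Perm (Fin n)) :
    tot (Finsupp.mapDomain (fun g : Fin d ↪ Fin n => g.trans σ.toEmbedding) (phichi d n)
      + phichi d n) = Tfun d n σ⁻¹ := by
  rw [tot, Tfun]
  refine Finset.sum_congr rfl fun g _ => ?_
  by_cases hm : StrictMono ⇑g
  · rw [if_pos hm, if_pos hm, Finsupp.add_apply, mapDomain_post_apply, phichi_apply,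
      phichi_apply, eps_mono hm, add_zero]
  · rw [if_neg hm, if_neg hm]

lemma Tfun_zero_of_even {d n : ℕ} (hd2 : 2 ≤ d) (hn2 : 2 ≤ n)
    (hC : ((Nat.choose (n - 2) (d - 2) : ℕ) : ZMod 2) = 0) (σ : Perm (Fin n)) :
    Tfun d n σ = 0 := by
  have h0 : ((⟨0, by omega⟩ : Fin n) : ℕ) + 1 = ((⟨1, by omega⟩ : Fin n) : ℕ) := by simp
  have hne : (⟨0, by omega⟩ : Fin n) ≠ (⟨1, by omega⟩ : Fin n) := by
    intro hc
    have := congrArg Fin.val hc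
    simp at this
  have := hom_eq_sgn2 hne (Tfun d n) (Tfun_hom) σ
  rw [this, Tfun_swap hd2 h0, hC, zero_mul]

/-- Classification of invariant vectors: any `φ` all of whose `σ`-differences lie in
`Ksub` is, modulo `Ksub`, a combination of the trivial vector and the sign vector. -/
lemma classify {d n : ℕ} (hd2 : 2 ≤ d) (hn : d ≤ n) (φ : (Fin d ↪ Fin n) →₀ ZMod 2)
    (h : ∀ σ : Perm (Fin n),
      ((0 : ZMod 2), Finsupp.mapDomain (fun g : Fin d ↪ Fin n => g.trans σ.toEmbedding) φ + φ)
        ∈ Ksub d n) :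
    ∃ a b : ZMod 2, ((a, φ + b • phichi d n) : MBig d n) ∈ Ksub d n := by
  have g0 : Fin d ↪ Fin n := ⟨Fin.castLE hn, Fin.castLE_injective hn⟩
  set χ : Perm (Fin d) → ZMod 2 := fun τ => φ (τ.toEmbedding.trans g0) + φ g0 with hχdef
  have claim1 : ∀ (g : Fin d ↪ Fin n) (τ : Perm (Fin d)),
      φ (τ.toEmbedding.trans g) + φ g = χ τ := by
    intro g τ
    obtain ⟨σ, hσ⟩ := exists_perm_trans g0 g
    have hback : g.trans σ⁻¹.toEmbedding = g0 := by rw [← hσ, cancel_trans]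
    have hc := (mem_Ksub_iff.mp (h σ)).1 g τ
    rw [Finsupp.add_apply, Finsupp.add_apply, mapDomain_post_apply, mapDomain_post_apply,
      trans_assoc', hback] at hc
    show φ (τ.toEmbedding.trans g) + φ g = φ (τ.toEmbedding.trans g0) + φ g0
    linear_combination hc + z2_add_self (φ g) - z2_add_self (φ ((Equiv.toEmbedding τ).trans g0))
  have claim2 : ∀ τ ρ : Perm (Fin d), χ (τ * ρ) = χ τ + χ ρ := by
    intro τ ρ
    have hassoc : (τ * ρ).toEmbedding.trans g0
        = ρ.toEmbedding.trans (τ.toEmbedding.trans g0) := rfl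
    have h1 := claim1 (τ.toEmbedding.trans g0) ρ
    show φ ((τ * ρ).toEmbedding.trans g0) + φ g0 = _
    rw [hassoc]
    have h2 : χ τ = φ (τ.toEmbedding.trans g0) + φ g0 := rfl
    have h3 : χ ρ = φ (ρ.toEmbedding.trans g0) + φ g0 := rfl
    linear_combination h1 + h2 + h3 - (claim1 g0 ρ) - z2_add_self (φ ((Equiv.toEmbedding τ).trans g0))
  have hne01 : (⟨0, by omega⟩ : Fin d) ≠ (⟨1, by omega⟩ : Fin d) := by
    intro hc; have := congrArg Fin.val hc; simp at this
  obtain hv := hom_eq_sgn2 hne01 χ claim2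
  set b := χ (Equiv.swap ⟨0, by omega⟩ ⟨1, by omega⟩) with hbdef
  have hcls : clsP (φ + b • phichi d n) := by
    intro g τ
    rw [Finsupp.add_apply, Finsupp.add_apply, Finsupp.smul_apply, Finsupp.smul_apply,
      phichi_apply, phichi_apply, eps_perm_trans, smul_eq_mul, smul_eq_mul]
    have h1 := claim1 g τ
    have h2 := hv τ
    linear_combination h1 + h2 + sgn2 τ * z2_add_self b - z2_add_self (φ g)
  exact ⟨tot (φ + b • phichi d n), b, mem_Ksub_iff.mpr ⟨hcls, rfl⟩⟩

lemma even_iff_cast0 (a : ℕ) : Even a ↔ ((a : ℕ) : ZMod 2) = 0 := by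
  rw [ZMod.natCast_eq_zero_iff, even_iff_two_dvd]

lemma choose_period {r k : ℕ} (m : ℕ) (hrk : r < 2 ^ k) :
    (((m + 2 ^ k).choose r : ℕ) : ZMod 2) = ((m.choose r : ℕ) : ZMod 2) := by
  rw [Nat.add_choose_eq]
  push_cast
  rw [Finset.sum_eq_single ((r, 0) : ℕ × ℕ)]
  · simp
  · rintro ⟨i, j⟩ hmem hne
    rw [Finset.HasAntidiagonal.mem_antidiagonal] at hmem
    have hj0 : j ≠ 0 := by
      rintro rfl
      exact hne (by rw [Prod.mk.injEq]; omega)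
    have hj : j ≠ 2 ^ k := by omega
    have hdvd : (2 : ℕ) ∣ (2 ^ k).choose j := Nat.Prime.dvd_choose_pow Nat.prime_two hj0 hj
    have hz : (((2 ^ k).choose j : ℕ) : ZMod 2) = 0 :=
      (ZMod.natCast_eq_zero_iff _ _).mpr hdvd
    rw [hz, mul_zero]
  · intro hmem
    exact absurd (Finset.HasAntidiagonal.mem_antidiagonal.mpr (by omega)) hmem

lemma choose3_mod (m : ℕ) : ((m.choose 3 : ℕ) : ZMod 2) = if m % 4 = 3 then 1 else 0 := by
  induction m using Nat.strong_induction_on with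
  | _ m ih =>
    rcases lt_or_ge m 4 with hm | hm
    · interval_cases m <;> decide
    · have h4 : m - 4 + 2 ^ 2 = m := by omega
      have hper := choose_period (r := 3) (k := 2) (m - 4) (by norm_num)
      rw [h4] at hper
      rw [hper, ih (m - 4) (by omega), show (m - 4) % 4 = m % 4 from by omega]


/-- Example: over `F₂`, with `d` odd, `d ≥ 3`, and `V = (M(0) ⊕ M(d)) / ⟨(1, ∑_f f)⟩`, the
`S_n`-action (post-composition on injections, descended to the quotient as `actQ`) has
invariants `V_n^{S_n}` of dimension `2` iff `C(n-2,d-2)` is even (and dimension `1`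
otherwise), for `n ≥ d`.  In particular the dimension is eventually periodic in `n` with
period a power of `2`, and for `d = 5` the smallest eventual period is `4`. -/
theorem example_one_invariant_dimensions (d : ℕ) (hd : 3 ≤ d) (hodd : Odd d)
    (actQ : ∀ n, Equiv.Perm (Fin n) → VQuot d n →ₗ[ZMod 2] VQuot d n)
    (hactQ : ∀ n (σ : Equiv.Perm (Fin n)) (c : ZMod 2) (φ : (Fin d ↪ Fin n) →₀ ZMod 2),
      actQ n σ (Submodule.Quotient.mk (c, φ)) =
        Submodule.Quotient.mk (c, Finsupp.mapDomain (fun g => g.trans σ.toEmbedding) φ))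
    (Inv : ∀ n, Submodule (ZMod 2) (VQuot d n))
    (hInv : ∀ n x, x ∈ Inv n ↔ ∀ σ, actQ n σ x = x)
    (F : ℕ → ℕ) (hF : ∀ n, F n = Module.finrank (ZMod 2) ↥(Inv n)) :
    (∀ n, d ≤ n →
      (F n = 2 ↔ Even (Nat.choose (n - 2) (d - 2))) ∧
      (¬ Even (Nat.choose (n - 2) (d - 2)) → F n = 1)) ∧
    (∃ k N : ℕ, ∀ n, N ≤ n → F (n + 2 ^ k) = F n) ∧
    (d = 5 →
      (∃ N, ∀ n, N ≤ n → F (n + 4) = F n) ∧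
      (∀ q, 0 < q → (∃ N, ∀ n, N ≤ n → F (n + q) = F n) → 4 ≤ q)) := by
  have hd2 : 2 ≤ d := by omega
  -- equality in the quotient
  have hmkeq : ∀ (n : ℕ) (x y : MBig d n),
      (Submodule.Quotient.mk x : VQuot d n) = Submodule.Quotient.mk y ↔ x + y ∈ Ksub d n := by
    intro n x y
    rw [Submodule.Quotient.eq, z2_sub]
  have hmkzero : ∀ (n : ℕ) (x : MBig d n),
      (Submodule.Quotient.mk x : VQuot d n) = 0 ↔ x ∈ Ksub d n := fun n x =>
    Submodule.Quotient.mk_eq_zero _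
  -- the invariance criterion
  have hinvmk : ∀ (n : ℕ) (c : ZMod 2) (φ : (Fin d ↪ Fin n) →₀ ZMod 2),
      (Submodule.Quotient.mk (c, φ) : VQuot d n) ∈ Inv n ↔
        ∀ σ : Perm (Fin n), (((0 : ZMod 2),
          Finsupp.mapDomain (fun g : Fin d ↪ Fin n => g.trans σ.toEmbedding) φ + φ) : MBig d n)
            ∈ Ksub d n := by
    intro n c φ
    rw [hInv]
    refine forall_congr' fun σ => ?_
    rw [hactQ n σ c φ, hmkeq]
    have he : (((c, Finsupp.mapDomain (fun g : Fin d ↪ Fin n => g.trans σ.toEmbedding) φ)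
        + (c, φ)) : MBig d n)
        = ((0 : ZMod 2), Finsupp.mapDomain
            (fun g : Fin d ↪ Fin n => g.trans σ.toEmbedding) φ + φ) := by
      rw [Prod.mk_add_mk, z2_add_self]
    rw [he]
  -- phichi is not class-constant
  have hnotcls : ∀ (n : ℕ), d ≤ n → ¬ clsP (phichi d n) := by
    intro n hn hcls
    set g0 : Fin d ↪ Fin n := ⟨Fin.castLE hn, Fin.castLE_injective hn⟩
    have h01 : (⟨0, by omega⟩ : Fin d) ≠ ⟨1, by omega⟩ := by
      intro hc; have := congrArg Fin.val hc; simp at this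
    have hx := hcls g0 (Equiv.swap ⟨0, by omega⟩ ⟨1, by omega⟩)
    rw [phichi_apply, phichi_apply, eps_perm_trans, sgn2_swap h01] at hx
    exact one_ne_zero (by linear_combination hx)
  -- the main dimension computation
  have hFval : ∀ n, d ≤ n → F n = if Even (Nat.choose (n - 2) (d - 2)) then 2 else 1 := by
    intro n hn
    have hn2 : 2 ≤ n := hd2.trans hn
    have h01n : ((⟨0, by omega⟩ : Fin n) : ℕ) + 1 = ((⟨1, by omega⟩ : Fin n) : ℕ) := by simp
    set u : VQuot d n := Submodule.Quotient.mk (((1 : ZMod 2), 0) : MBig d n) with hu_def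
    set p : VQuot d n := Submodule.Quotient.mk (((0 : ZMod 2), phichi d n) : MBig d n)
      with hp_def
    have hu_inv : u ∈ Inv n := by
      rw [hu_def, hInv]
      intro σ
      rw [hactQ n σ 1 0, Finsupp.mapDomain_zero]
    have hu_ne : u ≠ 0 := by
      rw [hu_def]
      intro hzero
      rw [hmkzero] at hzero
      have hmem := hzero
      have h2 := (mem_Ksub_iff.mp hmem).2
      rw [tot_zero'] at h2
      exact (by decide : (0 : ZMod 2) ≠ 1) h2
    have hp_notK : ∀ c : ZMod 2, ((c, phichi d n) : MBig d n) ∉ Ksub d n := fun c hmem =>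
      hnotcls n hn (mem_Ksub_iff.mp hmem).1
    -- the scalar computation (c+a) • u + b • p = mk (c+a, b • phichi)
    have hsmul : ∀ e b : ZMod 2, e • u + b • p
        = Submodule.Quotient.mk (((e, b • phichi d n)) : MBig d n) := by
      intro e b
      have hvec : (e • ((1 : ZMod 2), (0 : (Fin d ↪ Fin n) →₀ ZMod 2))
          + b • ((0 : ZMod 2), phichi d n) : MBig d n) = (e, b • phichi d n) := by
        refine Prod.ext ?_ ?_
        · show e • (1 : ZMod 2) + b • (0 : ZMod 2) = e
          rw [smul_eq_mul, mul_one, smul_eq_mul, mul_zero, add_zero]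
        · show e • (0 : (Fin d ↪ Fin n) →₀ ZMod 2) + b • phichi d n = b • phichi d n
          rw [smul_zero, zero_add]
      rw [hu_def, hp_def, ← Submodule.Quotient.mk_smul, ← Submodule.Quotient.mk_smul,
        ← Submodule.Quotient.mk_add, hvec]
    by_cases hC : Even (Nat.choose (n - 2) (d - 2))
    · -- dimension 2
      have hCz : ((Nat.choose (n - 2) (d - 2) : ℕ) : ZMod 2) = 0 := (even_iff_cast0 _).mp hC
      have hp_inv : p ∈ Inv n := by
        rw [hp_def, hinvmk]
        intro σ
        refine mem_Ksub_iff.mpr ⟨phichi_diff_cls σ, ?_⟩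
        rw [phichi_diff_tot, Tfun_zero_of_even hd2 hn2 hCz]
      have hspan : Inv n = Submodule.span (ZMod 2) {u, p} := by
        apply le_antisymm
        · intro x hx
          obtain ⟨⟨c, φ⟩, rfl⟩ := Submodule.Quotient.mk_surjective (Ksub d n) x
          obtain ⟨a, b, hab⟩ := classify hd2 hn φ ((hinvmk n c φ).mp hx)
          refine Submodule.mem_span_pair.mpr ⟨c + a, b, ?_⟩
          rw [hsmul]
          rw [hmkeq]
          have he : (((c + a, b • phichi d n) + (c, φ)) : MBig d n)
              = (a, φ + b • phichi d n) := by
            rw [Prod.mk_add_mk]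
            refine Prod.ext ?_ (add_comm _ _)
            show c + a + c = a
            linear_combination z2_add_self c
          rw [he]
          exact hab
        · rw [Submodule.span_le]
          intro y hy
          simp only [Set.mem_insert_iff, Set.mem_singleton_iff] at hy
          rcases hy with rfl | rfl
          · exact hu_inv
          · exact hp_inv
      have hp_ne : p ≠ 0 := fun hc => hp_notK 0 ((hmkzero n _).mp (hp_def ▸ hc))
      have hup_ne : u + p ≠ 0 := by
        intro hc
        rw [hu_def, hp_def, ← Submodule.Quotient.mk_add, hmkzero] at hc
        have he : (((1 : ZMod 2), (0 : (Fin d ↪ Fin n) →₀ ZMod 2))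
            + ((0 : ZMod 2), phichi d n) : MBig d n) = (1, phichi d n) := by
          rw [Prod.mk_add_mk, add_zero, zero_add]
        rw [he] at hc
        exact hp_notK 1 hc
      have hli : LinearIndependent (ZMod 2) ![u, p] := by
        rw [LinearIndependent.pair_iff]
        intro s t hst
        rcases z2_cases s with rfl | rfl <;> rcases z2_cases t with rfl | rfl
        · exact ⟨rfl, rfl⟩
        · rw [zero_smul, one_smul, zero_add] at hst
          exact absurd hst hp_ne
        · rw [zero_smul, one_smul, add_zero] at hst
          exact absurd hst hu_ne
        · rw [one_smul, one_smul] at hst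
          exact absurd hst hup_ne
      have hrange : Set.range ![u, p] = {u, p} := by
        ext y
        constructor
        · rintro ⟨i, rfl⟩
          fin_cases i
          · exact Set.mem_insert _ _
          · exact Set.mem_insert_of_mem _ rfl
        · rintro (rfl | rfl)
          · exact ⟨0, rfl⟩
          · exact ⟨1, rfl⟩
      rw [hF, hspan, ← hrange, finrank_span_eq_card hli, if_pos hC]
      simp
    · -- dimension 1
      have hCnz : ((Nat.choose (n - 2) (d - 2) : ℕ) : ZMod 2) ≠ 0 :=
        fun hc => hC ((even_iff_cast0 _).mpr hc)
      have hspan : Inv n = Submodule.span (ZMod 2) {u} := by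
        apply le_antisymm
        · intro x hx
          obtain ⟨⟨c, φ⟩, rfl⟩ := Submodule.Quotient.mk_surjective (Ksub d n) x
          obtain ⟨a, b, hab⟩ := classify hd2 hn φ ((hinvmk n c φ).mp hx)
          rcases z2_cases b with rfl | rfl
          · refine Submodule.mem_span_singleton.mpr ⟨c + a, ?_⟩
            have hzz : (c + a) • u + (0 : ZMod 2) • p = (c + a) • u := by
              rw [zero_smul, add_zero]
            rw [← hzz, hsmul, hmkeq]
            have he : (((c + a, (0 : ZMod 2) • phichi d n) + (c, φ)) : MBig d n)
                = (a, φ + (0 : ZMod 2) • phichi d n) := by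
              rw [Prod.mk_add_mk]
              refine Prod.ext ?_ ?_
              · show c + a + c = a
                linear_combination z2_add_self c
              · rw [zero_smul, zero_add, add_zero]
            rw [he]
            exact hab
          · exfalso
            rw [one_smul] at hab
            have h1 := hsmul (c + a) 1
            rw [one_smul, one_smul] at h1
            have heq2 : Submodule.Quotient.mk ((c, φ) : MBig d n) = (c + a) • u + p := by
              rw [h1, hmkeq]
              have he : (((c, φ) + (c + a, phichi d n)) : MBig d n)
                  = (a, φ + phichi d n) := by
                rw [Prod.mk_add_mk]
                refine Prod.ext ?_ rfl
                show c + (c + a) = a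
                linear_combination z2_add_self c
              rw [he]
              exact hab
            have hpInv : p ∈ Inv n := by
              have hx' : Submodule.Quotient.mk ((c, φ) : MBig d n) + (c + a) • u ∈ Inv n :=
                Submodule.add_mem _ hx (Submodule.smul_mem _ _ hu_inv)
              have heq3 : p = Submodule.Quotient.mk ((c, φ) : MBig d n) + (c + a) • u := by
                rw [heq2, add_right_comm, z2_add_self, zero_add]
              rw [heq3]
              exact hx'
            have hswapmem := ((hinvmk n 0 (phichi d n)).mp (hp_def ▸ hpInv))
              (Equiv.swap ⟨0, by omega⟩ ⟨1, by omega⟩)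
            have h2 := (mem_Ksub_iff.mp hswapmem).2
            rw [phichi_diff_tot, Equiv.swap_inv, Tfun_swap hd2 h01n] at h2
            exact hCnz h2
        · rw [Submodule.span_le]
          intro y hy
          simp only [Set.mem_singleton_iff] at hy
          subst hy
          exact hu_inv
      rw [hF, hspan, finrank_span_singleton hu_ne, if_neg hC]
  refine ⟨?_, ?_, ?_⟩
  · intro n hn
    rw [hFval n hn]
    by_cases hC : Even (Nat.choose (n - 2) (d - 2))
    · rw [if_pos hC]
      exact ⟨⟨fun _ => hC, fun _ => rfl⟩, fun h => absurd hC h⟩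
    · rw [if_neg hC]
      exact ⟨iff_of_false (by omega) hC, fun _ => rfl⟩
  · refine ⟨d, d, fun n hn => ?_⟩
    have hpow := Nat.lt_two_pow_self (n := d)
    have h1 : d ≤ n + 2 ^ d := by omega
    rw [hFval n hn, hFval (n + 2 ^ d) h1]
    have harith : n + 2 ^ d - 2 = n - 2 + 2 ^ d := by omega
    have hper := choose_period (r := d - 2) (k := d) (n - 2) (by omega)
    rw [harith]
    have hiff : Even ((n - 2 + 2 ^ d).choose (d - 2)) ↔ Even ((n - 2).choose (d - 2)) := by
      rw [even_iff_cast0, even_iff_cast0, hper]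
    by_cases hC : Even ((n - 2).choose (d - 2))
    · rw [if_pos hC, if_pos (hiff.mpr hC)]
    · rw [if_neg hC, if_neg (fun h => hC (hiff.mp h))]
  · rintro rfl
    have h52 : (5 : ℕ) - 2 = 3 := rfl
    constructor
    · refine ⟨5, fun n hn => ?_⟩
      have h1 : 5 ≤ n + 4 := by omega
      rw [hFval n hn, hFval (n + 4) h1, h52]
      have harith : n + 4 - 2 = n - 2 + 2 ^ 2 := by omega
      have hper := choose_period (r := 3) (k := 2) (n - 2) (by norm_num)
      rw [harith]
      have hiff : Even ((n - 2 + 2 ^ 2).choose 3) ↔ Even ((n - 2).choose 3) := by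
        rw [even_iff_cast0, even_iff_cast0, hper]
      by_cases hC : Even ((n - 2).choose 3)
      · rw [if_pos hC, if_pos (hiff.mpr hC)]
      · rw [if_neg hC, if_neg (fun h => hC (hiff.mp h))]
    · intro q hq hperiod
      by_contra hlt
      push_neg at hlt
      obtain ⟨N, hN⟩ := hperiod
      set m := 4 * (N + 2) + 1 with hm
      have hm5 : (5 : ℕ) ≤ m := by omega
      have hmN : N ≤ m := by omega
      have hFm : F m = 1 := by
        rw [hFval m hm5, h52]
        have hmod : (m - 2) % 4 = 3 := by omega
        have hcast : (((m - 2).choose 3 : ℕ) : ZMod 2) = 1 := by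
          rw [choose3_mod, if_pos hmod]
        rw [if_neg (fun he => one_ne_zero (hcast.symm.trans ((even_iff_cast0 _).mp he)))]
      have hFmq : F (m + q) = 2 := by
        rw [hFval (m + q) (by omega), h52]
        have hmod : (m + q - 2) % 4 ≠ 3 := by omega
        have hcast : (((m + q - 2).choose 3 : ℕ) : ZMod 2) = 0 := by
          rw [choose3_mod, if_neg hmod]
        rw [if_pos ((even_iff_cast0 _).mpr hcast)]
      have := hN m hmN
      omega
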